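/- Let F be a probability distribution on ℝ with mean zero that is heavy on left, i.e., ∫ min(|x|,a)·sign(x) dF(x) ≤ 0 for all a > 0. Then for every λ ≥ 0, ∫ exp(λx - (λ²/2)x²) dF(x) ≤ 1, and consequently for a compound Poisson process Y_t = Σ_{k=1}^{N_t} η_k with i.i.d. jumps η_k ~ F independent of the Poisson process N with rate κ, the compensator S̃(λ)_t = κ t ∫ (exp(λx - λ²x²/2) - 1 - λx) dF(x) is nonpositive for all t, λ ≥ 0. -/

import Mathlib

open MeasureTheory Set Filter

/-! Auxiliary development for the de la Peña "heavy on left" inequality. -/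

lemma measurable_realSign : Measurable Real.sign := by
  have h : Real.sign = fun r : ℝ => if r < 0 then (-1 : ℝ) else if 0 < r then 1 else 0 := by
    funext r; rfl
  rw [h]
  exact Measurable.ite (measurableSet_lt measurable_id measurable_const) measurable_const
    (Measurable.ite (measurableSet_lt measurable_const measurable_id) measurable_const
      measurable_const)

lemma abs_realSign_le (x : ℝ) : |Real.sign x| ≤ 1 := by
  rcases Real.sign_apply_eq x with h | h | h <;> rw [h] <;> norm_num

/-- The exponential kernel `E a = exp (-a - a^2/2)`. -/
noncomputable def mkE (a : ℝ) : ℝ := Real.exp (-a - a ^ 2 / 2)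

lemma hasDerivAt_mkE (a : ℝ) : HasDerivAt mkE ((-1 - a) * mkE a) a := by
  have h1 : HasDerivAt (fun a : ℝ => -a - a ^ 2 / 2) (-1 - a) a := by
    have h := ((hasDerivAt_id a).neg.sub (((hasDerivAt_id a).pow 2).div_const 2))
    refine h.congr_deriv ?_
    simp
  have h2 := h1.exp
  exact h2.congr_deriv (by simp only [mkE]; ring)

lemma continuous_mkE : Continuous mkE := by
  unfold mkE; continuity

lemma mkE_pos (a : ℝ) : 0 < mkE a := Real.exp_pos _

/-- The weight `w a = (2a + a^2) E a`. -/
noncomputable def mkw (a : ℝ) : ℝ := (2 * a + a ^ 2) * mkE a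

lemma continuous_mkw : Continuous mkw := by
  unfold mkw
  exact ((continuous_const.mul continuous_id).add (continuous_pow 2)).mul continuous_mkE

lemma mkw_nonneg {a : ℝ} (ha : 0 ≤ a) : 0 ≤ mkw a := by
  have h : (0 : ℝ) ≤ 2 * a + a ^ 2 := by nlinarith
  exact mul_nonneg h (mkE_pos a).le

/-- `-W` where `W a = (1+a) E a`; an antiderivative of `w`. -/
noncomputable def mknW (a : ℝ) : ℝ := -((1 + a) * mkE a)

/-- An antiderivative of `a * w a`. -/
noncomputable def mkA (a : ℝ) : ℝ := 1 - (1 + a + a ^ 2) * mkE a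

lemma hasDerivAt_mknW (a : ℝ) : HasDerivAt mknW (mkw a) a := by
  have h : HasDerivAt (fun a : ℝ => (1 + a) * mkE a)
      ((0 + 1) * mkE a + (1 + a) * ((-1 - a) * mkE a)) a :=
    ((hasDerivAt_const a (1 : ℝ)).add (hasDerivAt_id a)).mul (hasDerivAt_mkE a)
  have h2 := h.neg
  refine h2.congr_deriv ?_
  unfold mkw; ring

lemma hasDerivAt_mkA (a : ℝ) : HasDerivAt mkA (a * mkw a) a := by
  have h : HasDerivAt (fun a : ℝ => (1 + a + a ^ 2) * mkE a)
      ((1 + 2 * a) * mkE a + (1 + a + a ^ 2) * ((-1 - a) * mkE a)) a := by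
    refine HasDerivAt.mul ?_ (hasDerivAt_mkE a)
    have h0 := (((hasDerivAt_const a (1 : ℝ)).add (hasDerivAt_id a)).add ((hasDerivAt_id a).pow 2))
    refine h0.congr_deriv ?_
    simp
  have h2 := (hasDerivAt_const a (1 : ℝ)).sub h
  refine h2.congr_deriv ?_
  unfold mkw; ring

lemma tendsto_poly_mkE (c₀ c₁ c₂ : ℝ) :
    Tendsto (fun a => (c₀ + c₁ * a + c₂ * a ^ 2) * mkE a) atTop (nhds 0) := by
  have hbig : Tendsto (fun a : ℝ => (|c₀| + |c₁| * a + |c₂| * a ^ 2) * Real.exp (-a))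
      atTop (nhds 0) := by
    have h0 : Tendsto (fun a : ℝ => |c₀| * (a ^ 0 * Real.exp (-a))) atTop (nhds 0) := by
      simpa using (Real.tendsto_pow_mul_exp_neg_atTop_nhds_zero 0).const_mul |c₀|
    have h1 : Tendsto (fun a : ℝ => |c₁| * (a ^ 1 * Real.exp (-a))) atTop (nhds 0) := by
      simpa using (Real.tendsto_pow_mul_exp_neg_atTop_nhds_zero 1).const_mul |c₁|
    have h2 : Tendsto (fun a : ℝ => |c₂| * (a ^ 2 * Real.exp (-a))) atTop (nhds 0) := by
      simpa using (Real.tendsto_pow_mul_exp_neg_atTop_nhds_zero 2).const_mul |c₂|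
    have h3 := (h0.add h1).add h2
    simp only [add_zero] at h3
    refine h3.congr fun a => ?_
    ring
  have key : Tendsto (fun a => |(c₀ + c₁ * a + c₂ * a ^ 2) * mkE a|) atTop (nhds 0) := by
    refine squeeze_zero' (Eventually.of_forall fun a => abs_nonneg _) ?_ hbig
    filter_upwards [eventually_ge_atTop (0 : ℝ)] with a ha
    have h1 : |c₀ + c₁ * a + c₂ * a ^ 2| ≤ |c₀| + |c₁| * a + |c₂| * a ^ 2 := by
      calc |c₀ + c₁ * a + c₂ * a ^ 2| ≤ |c₀ + c₁ * a| + |c₂ * a ^ 2| := abs_add_le _ _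
        _ ≤ |c₀| + |c₁ * a| + |c₂ * a ^ 2| := by linarith [abs_add_le c₀ (c₁ * a)]
        _ = |c₀| + |c₁| * a + |c₂| * a ^ 2 := by
            rw [abs_mul, abs_mul, abs_of_nonneg ha, abs_of_nonneg (by positivity : (0:ℝ) ≤ a ^ 2)]
    have h2 : mkE a ≤ Real.exp (-a) := by
      apply Real.exp_le_exp.mpr
      nlinarith
    calc |(c₀ + c₁ * a + c₂ * a ^ 2) * mkE a|
        = |c₀ + c₁ * a + c₂ * a ^ 2| * mkE a := by rw [abs_mul, abs_of_pos (mkE_pos a)]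
      _ ≤ (|c₀| + |c₁| * a + |c₂| * a ^ 2) * Real.exp (-a) := by
          apply mul_le_mul h1 h2 (mkE_pos a).le (by positivity)
  exact (tendsto_zero_iff_abs_tendsto_zero _).mpr key

lemma tendsto_mknW : Tendsto mknW atTop (nhds 0) := by
  have h := tendsto_poly_mkE (-1) (-1) 0
  refine h.congr fun a => ?_
  unfold mknW; ring

lemma tendsto_mkA : Tendsto mkA atTop (nhds 1) := by
  have h := tendsto_poly_mkE 1 1 1
  have h2 := h.const_sub 1
  rw [sub_zero] at h2
  refine h2.congr fun a => ?_
  unfold mkA; ring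

lemma integrableOn_mkw {c : ℝ} (hc : 0 ≤ c) : IntegrableOn mkw (Ioi c) := by
  refine integrableOn_Ioi_deriv_of_nonneg' (fun x _ => hasDerivAt_mknW x)
    (fun x hx => mkw_nonneg (hc.trans (le_of_lt hx))) tendsto_mknW

lemma integral_mkw_Ioi {c : ℝ} (hc : 0 ≤ c) : ∫ a in Ioi c, mkw a = (1 + c) * mkE c := by
  have h := integral_Ioi_of_hasDerivAt_of_nonneg' (fun x _ => hasDerivAt_mknW x)
    (fun x hx => mkw_nonneg (hc.trans (le_of_lt hx))) tendsto_mknW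
  simpa [mknW] using h

lemma integrableOn_amkw : IntegrableOn (fun a => a * mkw a) (Ioi (0 : ℝ)) :=
  integrableOn_Ioi_deriv_of_nonneg' (fun x _ => hasDerivAt_mkA x)
    (fun x hx => mul_nonneg (le_of_lt hx) (mkw_nonneg (le_of_lt hx))) tendsto_mkA

lemma key_integral {l r : ℝ} (hl : 0 < l) (hr : 0 ≤ r) :
    ∫ a in Ioi (0 : ℝ), min r (a / l) * mkw a
      = (1 - Real.exp (-(l * r) - (l * r) ^ 2 / 2)) / l := by
  set c := l * r with hc
  have hc0 : 0 ≤ c := mul_nonneg hl.le hr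
  have hrc : r = c / l := by field_simp [hc]; rw [hc]; ring
  have hIoc : ∫ a in Ioc (0 : ℝ) c, min r (a / l) * mkw a = mkA c / l := by
    have hcongr : EqOn (fun a => min r (a / l) * mkw a) (fun a => a * mkw a / l) (Ioc (0:ℝ) c) := by
      intro a ha
      have hle : a / l ≤ r := by
        rw [div_le_iff₀ hl]
        calc a ≤ c := ha.2
          _ = r * l := by rw [hc]; ring
      simp only
      rw [min_eq_right hle]; ring
    rw [setIntegral_congr_fun measurableSet_Ioc hcongr, ← intervalIntegral.integral_of_le hc0]
    rw [intervalIntegral.integral_div]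
    rw [intervalIntegral.integral_eq_sub_of_hasDerivAt (fun t _ => hasDerivAt_mkA t)
      ((continuous_id.mul continuous_mkw).intervalIntegrable 0 c)]
    have h0 : mkA 0 = 0 := by unfold mkA mkE; norm_num
    rw [h0, sub_zero]
  have hIoi : ∫ a in Ioi c, min r (a / l) * mkw a = r * ((1 + c) * mkE c) := by
    have hcongr : EqOn (fun a => min r (a / l) * mkw a) (fun a => r * mkw a) (Ioi c) := by
      intro a ha
      have hle : r ≤ a / l := by
        rw [le_div_iff₀ hl]
        calc r * l = c := by rw [hc]; ring
          _ ≤ a := le_of_lt ha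
      simp only
      rw [min_eq_left hle]
    rw [setIntegral_congr_fun measurableSet_Ioi hcongr, integral_const_mul,
      integral_mkw_Ioi hc0]
  have hsplit : ∫ a in Ioi (0 : ℝ), min r (a / l) * mkw a
      = (∫ a in Ioc (0 : ℝ) c, min r (a / l) * mkw a) + ∫ a in Ioi c, min r (a / l) * mkw a := by
    rw [← Ioc_union_Ioi_eq_Ioi hc0]
    refine setIntegral_union (Ioc_disjoint_Ioi le_rfl) measurableSet_Ioi ?_ ?_
    · exact (Continuous.integrableOn_Ioc (by
        exact ((continuous_const.min (continuous_id.div_const l)).mul continuous_mkw)))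
    · refine IntegrableOn.congr_fun ((integrableOn_mkw hc0).const_mul r) ?_ measurableSet_Ioi
      intro a ha
      have hle : r ≤ a / l := by
        rw [le_div_iff₀ hl]
        calc r * l = c := by rw [hc]; ring
          _ ≤ a := le_of_lt ha
      simp only
      rw [min_eq_left hle]
  rw [hsplit, hIoc, hIoi, hrc]
  unfold mkA mkE
  have hl' : l ≠ 0 := ne_of_gt hl
  field_simp
  ring

lemma pointwise_exp_le {l : ℝ} (x : ℝ) :
    Real.exp (l * x - l ^ 2 / 2 * x ^ 2)
      ≤ 1 + Real.sign x * (1 - Real.exp (-(l * |x|) - l ^ 2 / 2 * x ^ 2)) := by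
  rcases lt_trichotomy x 0 with hx | rfl | hx
  · rw [Real.sign_of_neg hx, abs_of_neg hx]
    have h : -(l * -x) - l ^ 2 / 2 * x ^ 2 = l * x - l ^ 2 / 2 * x ^ 2 := by ring
    rw [h]
    linarith
  · simp
  · rw [Real.sign_of_pos hx, abs_of_pos hx, one_mul]
    have h := Real.cosh_le_exp_half_sq (l * x)
    rw [Real.cosh_eq] at h
    have hq : (l * x) ^ 2 / 2 = l ^ 2 / 2 * x ^ 2 := by ring
    rw [hq] at h
    set q := l ^ 2 / 2 * x ^ 2 with hqdef
    have e1 : Real.exp (l * x - q) = Real.exp (l * x) * Real.exp (-q) := by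
      rw [sub_eq_add_neg, Real.exp_add]
    have e2 : Real.exp (-(l * x) - q) = Real.exp (-(l * x)) * Real.exp (-q) := by
      rw [sub_eq_add_neg, Real.exp_add]
    have e3 : Real.exp q * Real.exp (-q) = 1 := by
      rw [← Real.exp_add]; simp
    have hp := Real.exp_pos (-q)
    nlinarith [mul_le_mul_of_nonneg_right h hp.le]

lemma integrable_expTerm (F : Measure ℝ) [IsProbabilityMeasure F] (l : ℝ) :
    Integrable (fun x => Real.exp (l * x - l ^ 2 / 2 * x ^ 2)) F := by
  refine Integrable.mono' (integrable_const (Real.exp (1 / 2)))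
    (Continuous.aestronglyMeasurable (by continuity)) ?_
  refine Eventually.of_forall fun x => ?_
  rw [Real.norm_eq_abs, abs_of_pos (Real.exp_pos _)]
  apply Real.exp_le_exp.mpr
  nlinarith [sq_nonneg (l * x - 1)]

lemma integrable_g (F : Measure ℝ) [IsProbabilityMeasure F] {l : ℝ} (hl : 0 ≤ l) :
    Integrable (fun x => Real.sign x * (1 - Real.exp (-(l * |x|) - l ^ 2 / 2 * x ^ 2))) F := by
  refine Integrable.mono' (integrable_const 1) ?_ (Eventually.of_forall fun x => ?_)
  · have m1 : Measurable fun x : ℝ => -(l * |x|) - l ^ 2 / 2 * x ^ 2 := by measurability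
    exact (measurable_realSign.mul
      (measurable_const.sub (Real.measurable_exp.comp m1))).aestronglyMeasurable
  · rw [Real.norm_eq_abs, abs_mul]
    have h1 := abs_realSign_le x
    have h2 : |1 - Real.exp (-(l * |x|) - l ^ 2 / 2 * x ^ 2)| ≤ 1 := by
      have he1 : Real.exp (-(l * |x|) - l ^ 2 / 2 * x ^ 2) ≤ 1 := by
        rw [Real.exp_le_one_iff]
        have := abs_nonneg x
        nlinarith
      have he2 := Real.exp_pos (-(l * |x|) - l ^ 2 / 2 * x ^ 2)
      rw [abs_le]
      constructor <;> linarith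
    calc |Real.sign x| * |1 - Real.exp (-(l * |x|) - l ^ 2 / 2 * x ^ 2)|
        ≤ 1 * 1 := mul_le_mul h1 h2 (abs_nonneg _) zero_le_one
      _ = 1 := by norm_num

lemma integral_g_nonpos (F : Measure ℝ) [IsProbabilityMeasure F]
    (hint : Integrable (fun x : ℝ => x) F)
    (hheavy : ∀ a > (0 : ℝ), ∫ x, min |x| a * Real.sign x ∂F ≤ 0)
    {l : ℝ} (hl : 0 < l) :
    ∫ x, Real.sign x * (1 - Real.exp (-(l * |x|) - l ^ 2 / 2 * x ^ 2)) ∂F ≤ 0 := by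
  set f : ℝ → ℝ → ℝ := fun x a => min |x| (a / l) * Real.sign x * mkw a with hf
  have hw : Integrable mkw (volume.restrict (Ioi (0 : ℝ))) := integrableOn_mkw le_rfl
  have haw : Integrable (fun a => a * mkw a) (volume.restrict (Ioi (0 : ℝ))) := integrableOn_amkw
  have hmeas : Measurable (Function.uncurry f) := by
    refine Measurable.mul (Measurable.mul ?_ ?_) ?_
    · exact measurable_fst.abs.min (measurable_snd.div_const l)
    · exact measurable_realSign.comp measurable_fst
    · exact continuous_mkw.measurable.comp measurable_snd
  have hbound : Integrable
      (fun p : ℝ × ℝ => |p.1| * |mkw p.2| + 1 * (|p.2| / l * |mkw p.2|))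
      (F.prod (volume.restrict (Ioi (0 : ℝ)))) := by
    refine Integrable.add (hint.abs.mul_prod hw.abs) ?_
    have hg2 : Integrable (fun a => |a| / l * |mkw a|) (volume.restrict (Ioi (0 : ℝ))) := by
      refine (haw.div_const l).congr ?_
      filter_upwards [ae_restrict_mem measurableSet_Ioi] with a (ha : a ∈ Ioi (0 : ℝ))
      rw [abs_of_pos ha, abs_of_nonneg (mkw_nonneg (le_of_lt ha))]
      ring
    exact (integrable_const (μ := F) (1 : ℝ)).mul_prod hg2
  have hInt : Integrable (Function.uncurry f) (F.prod (volume.restrict (Ioi (0 : ℝ)))) := by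
    refine hbound.mono' hmeas.aestronglyMeasurable ?_
    refine Eventually.of_forall fun p => ?_
    rcases p with ⟨x, a⟩
    simp only [Function.uncurry, Real.norm_eq_abs, hf]
    have h1 : |min |x| (a / l)| ≤ |x| + |a| / l := by
      have ha1 : (0 : ℝ) ≤ |a| / l := div_nonneg (abs_nonneg a) hl.le
      rcases min_cases |x| (a / l) with ⟨h, _⟩ | ⟨h, _⟩ <;> rw [h]
      · rw [abs_abs]; linarith
      · rw [abs_div, abs_of_pos hl]
        linarith [abs_nonneg x]
    have h2 := abs_realSign_le x
    calc |min |x| (a / l) * Real.sign x * mkw a|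
        = |min |x| (a / l)| * |Real.sign x| * |mkw a| := by rw [abs_mul, abs_mul]
      _ ≤ (|x| + |a| / l) * 1 * |mkw a| := by
          refine mul_le_mul_of_nonneg_right ?_ (abs_nonneg _)
          exact mul_le_mul h1 h2 (abs_nonneg _) (by positivity)
      _ = |x| * |mkw a| + 1 * (|a| / l * |mkw a|) := by ring
  have hswap := integral_integral_swap (f := f) (μ := F) (ν := volume.restrict (Ioi (0:ℝ))) hInt
  have hLHS : ∫ x, ∫ a in Ioi (0 : ℝ), f x a ∂volume ∂F
      = ∫ x, (1 / l) * (Real.sign x * (1 - Real.exp (-(l * |x|) - l ^ 2 / 2 * x ^ 2))) ∂F := by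
    refine integral_congr_ae (Eventually.of_forall fun x => ?_)
    have heq : ∀ a : ℝ, f x a = Real.sign x * (min |x| (a / l) * mkw a) := by
      intro a; simp only [hf]; ring
    calc ∫ a in Ioi (0 : ℝ), f x a
        = ∫ a in Ioi (0 : ℝ), Real.sign x * (min |x| (a / l) * mkw a) := by simp_rw [heq]
      _ = Real.sign x * ∫ a in Ioi (0 : ℝ), min |x| (a / l) * mkw a := integral_const_mul _ _
      _ = Real.sign x * ((1 - Real.exp (-(l * |x|) - (l * |x|) ^ 2 / 2)) / l) := by
          rw [key_integral hl (abs_nonneg x)]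
      _ = (1 / l) * (Real.sign x * (1 - Real.exp (-(l * |x|) - l ^ 2 / 2 * x ^ 2))) := by
          have hsq : (l * |x|) ^ 2 / 2 = l ^ 2 / 2 * x ^ 2 := by
            rw [mul_pow, sq_abs]; ring
          rw [hsq]; ring
  have hRHS : ∫ a in Ioi (0 : ℝ), (∫ x, f x a ∂F) ∂volume ≤ 0 := by
    apply integral_nonpos_of_ae
    filter_upwards [ae_restrict_mem measurableSet_Ioi] with a (ha : a ∈ Ioi (0 : ℝ))
    have heq : ∫ x, f x a ∂F = (∫ x, min |x| (a / l) * Real.sign x ∂F) * mkw a :=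
      integral_mul_const _ _
    rw [heq]
    exact mul_nonpos_iff.mpr (Or.inr ⟨hheavy (a / l) (div_pos ha hl), mkw_nonneg (le_of_lt ha)⟩)
  have hfin : (1 / l) * (∫ x, Real.sign x * (1 - Real.exp (-(l * |x|) - l ^ 2 / 2 * x ^ 2)) ∂F)
      ≤ 0 := by
    calc (1 / l) * (∫ x, Real.sign x * (1 - Real.exp (-(l * |x|) - l ^ 2 / 2 * x ^ 2)) ∂F)
        = ∫ x, (1 / l) * (Real.sign x * (1 - Real.exp (-(l * |x|) - l ^ 2 / 2 * x ^ 2))) ∂F :=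
          (integral_const_mul _ _).symm
      _ = ∫ a in Ioi (0 : ℝ), (∫ x, f x a ∂F) ∂volume := by rw [← hLHS]; exact hswap
      _ ≤ 0 := hRHS
  have hl' : (0 : ℝ) < 1 / l := by positivity
  by_contra hcon
  push_neg at hcon
  nlinarith [mul_pos hl' hcon]

theorem heavy_on_left_compensator_nonpos
    (F : Measure ℝ) [IsProbabilityMeasure F]
    (hint : Integrable (fun x : ℝ => x) F)
    (hmean : ∫ x, x ∂F = 0)
    (hheavy : ∀ a > (0 : ℝ), ∫ x, min |x| a * Real.sign x ∂F ≤ 0) :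
    (∀ l : ℝ, 0 ≤ l → ∫ x, Real.exp (l * x - l ^ 2 / 2 * x ^ 2) ∂F ≤ 1) ∧
    (∀ κ t l : ℝ, 0 ≤ κ → 0 ≤ t → 0 ≤ l →
      κ * t * ∫ x, (Real.exp (l * x - l ^ 2 / 2 * x ^ 2) - 1 - l * x) ∂F ≤ 0) := by
  have part1 : ∀ l : ℝ, 0 ≤ l → ∫ x, Real.exp (l * x - l ^ 2 / 2 * x ^ 2) ∂F ≤ 1 := by
    intro l hl
    rcases hl.eq_or_lt with rfl | hl'
    · simp
    · have hφ := integrable_expTerm F l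
      have hgI := integrable_g F hl
      have hgle := integral_g_nonpos F hint hheavy hl'
      calc ∫ x, Real.exp (l * x - l ^ 2 / 2 * x ^ 2) ∂F
          ≤ ∫ x, (1 + Real.sign x * (1 - Real.exp (-(l * |x|) - l ^ 2 / 2 * x ^ 2))) ∂F := by
            exact integral_mono hφ ((integrable_const 1).add hgI) fun x => pointwise_exp_le x
        _ = 1 + ∫ x, Real.sign x * (1 - Real.exp (-(l * |x|) - l ^ 2 / 2 * x ^ 2)) ∂F := by
            rw [integral_add (integrable_const 1) hgI, integral_const]
            simp
        _ ≤ 1 := by linarith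
  refine ⟨part1, ?_⟩
  intro κ t l hκ ht hl
  have hφ := integrable_expTerm F l
  have h1 := part1 l hl
  have hI : ∫ x, (Real.exp (l * x - l ^ 2 / 2 * x ^ 2) - 1 - l * x) ∂F
      = (∫ x, Real.exp (l * x - l ^ 2 / 2 * x ^ 2) ∂F) - 1 - 0 := by
    have hsub : Integrable (fun x => Real.exp (l * x - l ^ 2 / 2 * x ^ 2) - 1) F :=
      hφ.sub (integrable_const 1)
    have hlx : Integrable (fun x : ℝ => l * x) F := hint.const_mul l
    rw [integral_sub hsub hlx, integral_sub hφ (integrable_const 1), integral_const]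
    rw [integral_const_mul, hmean, mul_zero]
    simp
  rw [hI]
  have h2 : (∫ x, Real.exp (l * x - l ^ 2 / 2 * x ^ 2) ∂F) - 1 - 0 ≤ 0 := by linarith
  exact mul_nonpos_iff.mpr (Or.inl ⟨mul_nonneg hκ ht, h2⟩)
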